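/- Let κ be a Markov kernel on a measurable space S, let μ be a probability measure on S, and let A ⊆ S be measurable. Suppose there is a measurable set N ⊆ S with μ(N) = 0 such that κ(x, N) = 0 for every x ∈ S, and such that for every y ∉ N the Cesàro averages converge: (1/n) ∑_{i=0}^{n−1} κ^i(y, A) → μ(A) as n → ∞. Then for every x ∈ S one has (1/n) ∑_{i=1}^{n} κ^i(x, A) → μ(A) as n → ∞. In particular, if μ(A) > 0 then ∑_{n=1}^{∞} κ^n(x, A) = ∞ for every x ∈ S. -/

import Mathlib

open MeasureTheory ProbabilityTheory Filter

/-- The `n`-step kernel of a Markov kernel `κ`: `κ⁰(x,·) = δ_x` and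
`κ^{n+1}(x, A) = ∫ κⁿ(y, A) κ(x, dy)`. -/
noncomputable def kernelIter {S : Type*} [MeasurableSpace S]
    (κ : Kernel S S) : ℕ → Kernel S S
  | 0 => Kernel.id
  | n + 1 => (kernelIter κ n).comp κ

lemma kernelIter_isMarkov {S : Type*} [MeasurableSpace S]
    (κ : Kernel S S) [IsMarkovKernel κ] : ∀ n, IsMarkovKernel (kernelIter κ n)
  | 0 => by rw [kernelIter]; infer_instance
  | n + 1 => by
    rw [kernelIter]
    have := kernelIter_isMarkov κ n
    infer_instance

/-- Upgrading almost-everywhere Cesàro convergence to convergence from every starting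
point: if `κ(x, N) = 0` for all `x`, `μ(N) = 0`, and for every `y ∉ N` the Cesàro
averages `(1/n) ∑_{i=0}^{n-1} κ^i(y, A)` converge to `μ(A)`, then for every `x ∈ S`
the averages `(1/n) ∑_{i=1}^{n} κ^i(x, A)` converge to `μ(A)`; in particular if
`μ(A) > 0` then `∑_{n≥1} κⁿ(x, A) = ∞` for every `x`. -/
theorem cesaro_convergence_everywhere_of_ae
    {S : Type*} [MeasurableSpace S] (κ : Kernel S S) [IsMarkovKernel κ]
    (μ : Measure S) [IsProbabilityMeasure μ]
    (A : Set S) (hA : MeasurableSet A)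
    (N : Set S) (hN : MeasurableSet N) (hμN : μ N = 0)
    (hκN : ∀ x : S, κ x N = 0)
    (hae : ∀ y ∉ N, Tendsto
      (fun n : ℕ => (1 / (n : ℝ)) * ∑ i ∈ Finset.range n, (kernelIter κ i y A).toReal)
      atTop (nhds (μ A).toReal)) :
    (∀ x : S, Tendsto
      (fun n : ℕ => (1 / (n : ℝ)) * ∑ i ∈ Finset.range n, (kernelIter κ (i + 1) x A).toReal)
      atTop (nhds (μ A).toReal)) ∧
    (0 < μ A → ∀ x : S, ∑' n : ℕ, kernelIter κ (n + 1) x A = ⊤) := by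
  have hM : ∀ n, IsMarkovKernel (kernelIter κ n) := kernelIter_isMarkov κ
  have hiter : ∀ (n : ℕ) (x : S), kernelIter κ (n + 1) x A = ∫⁻ y, kernelIter κ n y A ∂(κ x) := by
    intro n x
    rw [kernelIter, Kernel.comp_apply' _ _ _ hA]
  have hle : ∀ (n : ℕ) (y : S), kernelIter κ n y A ≤ 1 := by
    intro n y
    haveI := hM n
    exact (measure_mono (Set.subset_univ A)).trans_eq measure_univ
  have hne : ∀ (n : ℕ) (y : S), kernelIter κ n y A ≠ ⊤ :=
    fun n y => ((hle n y).trans_lt ENNReal.one_lt_top).ne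
  have htR : ∀ (n : ℕ) (y : S), (kernelIter κ n y A).toReal ≤ 1 := by
    intro n y
    simpa using ENNReal.toReal_mono (by norm_num) (hle n y)
  have hmeas : ∀ n : ℕ, Measurable fun y => kernelIter κ n y A :=
    fun n => Kernel.measurable_coe _ hA
  have key : ∀ x : S, Tendsto
      (fun n : ℕ => (1 / (n : ℝ)) * ∑ i ∈ Finset.range n, (kernelIter κ (i + 1) x A).toReal)
      atTop (nhds (μ A).toReal) := by
    intro x
    have hint : ∀ i : ℕ, Integrable (fun y => (kernelIter κ i y A).toReal) (κ x) := by
      intro i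
      apply integrable_toReal_of_lintegral_ne_top (hmeas i).aemeasurable
      rw [← hiter i x]
      exact hne _ _
    have heq : ∀ n : ℕ, (1 / (n : ℝ)) * ∑ i ∈ Finset.range n, (kernelIter κ (i + 1) x A).toReal
        = ∫ y, (1 / (n : ℝ)) * ∑ i ∈ Finset.range n, (kernelIter κ i y A).toReal ∂(κ x) := by
      intro n
      rw [integral_const_mul, integral_finset_sum _ (fun i _ => hint i)]
      congr 1
      refine Finset.sum_congr rfl fun i _ => ?_
      rw [hiter i x, ← integral_toReal (hmeas i).aemeasurable
        (ae_of_all _ fun y => (hle i y).trans_lt ENNReal.one_lt_top)]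
    have hconst : (μ A).toReal = ∫ _, (μ A).toReal ∂(κ x) := by
      simp
    have hconv : Tendsto
        (fun n : ℕ => ∫ y, (1 / (n : ℝ)) * ∑ i ∈ Finset.range n, (kernelIter κ i y A).toReal ∂(κ x))
        atTop (nhds (μ A).toReal) := by
      rw [hconst]
      apply tendsto_integral_of_dominated_convergence (fun _ => (1 : ℝ))
      · intro n
        exact (measurable_const.mul
          (Finset.measurable_sum _ fun i _ => (hmeas i).ennreal_toReal)).aestronglyMeasurable
      · exact integrable_const 1
      · intro n
        refine ae_of_all _ fun y => ?_
        have hnn : 0 ≤ ∑ i ∈ Finset.range n, (kernelIter κ i y A).toReal :=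
          Finset.sum_nonneg fun i _ => ENNReal.toReal_nonneg
        rcases Nat.eq_zero_or_pos n with h0 | hn
        · simp [h0]
        · rw [Real.norm_eq_abs, abs_of_nonneg (by positivity)]
          calc (1 / (n : ℝ)) * ∑ i ∈ Finset.range n, (kernelIter κ i y A).toReal
              ≤ (1 / (n : ℝ)) * ∑ _i ∈ Finset.range n, (1 : ℝ) := by
                apply mul_le_mul_of_nonneg_left (Finset.sum_le_sum fun i _ => htR i y)
                positivity
            _ = 1 := by
                field_simp
                simp
      · have hnotN : ∀ᵐ y ∂(κ x), y ∉ N := by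
          rw [ae_iff]
          simpa [not_not] using hκN x
        filter_upwards [hnotN] with y hy
        exact hae y hy
    exact hconv.congr fun n => (heq n).symm
  refine ⟨key, fun hpos x => ?_⟩
  by_contra h
  have hlt : (∑' n : ℕ, kernelIter κ (n + 1) x A) < ⊤ := lt_top_iff_ne_top.mpr h
  set C := (∑' n : ℕ, kernelIter κ (n + 1) x A).toReal with hC
  have hpart : ∀ n : ℕ, ∑ i ∈ Finset.range n, (kernelIter κ (i + 1) x A).toReal ≤ C := by
    intro n
    rw [← ENNReal.toReal_sum (fun i _ => hne _ _)]
    exact ENNReal.toReal_mono hlt.ne (ENNReal.sum_le_tsum _)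
  have hzero : Tendsto
      (fun n : ℕ => (1 / (n : ℝ)) * ∑ i ∈ Finset.range n, (kernelIter κ (i + 1) x A).toReal)
      atTop (nhds 0) := by
    have hub : Tendsto (fun n : ℕ => (1 / (n : ℝ)) * C) atTop (nhds 0) := by
      simpa using tendsto_one_div_atTop_nhds_zero_nat.mul_const C
    refine squeeze_zero (fun n => ?_) (fun n => ?_) hub
    · positivity
    · apply mul_le_mul_of_nonneg_left (hpart n)
      positivity
  have := tendsto_nhds_unique (key x) hzero
  have hμA : μ A = 0 := by
    have hfin : μ A ≠ ⊤ := (measure_lt_top μ A).ne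
    exact (ENNReal.toReal_eq_zero_iff _).mp this |>.resolve_right hfin
  exact absurd hμA hpos.ne'
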